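/- The matrices F^α and G_α extracted from an invertible pentagon solution satisfy the mixed (Heisenberg-double) permutation relation: for all σ, τ ∈ ι, Σ_{α,β,γ} m_{αβ}^τ · μ^{βγ}_σ · F^α · G_γ = G_σ · F^τ, where m_{αβ}^γ := tr(G_α G_β G^γ) and μ^{αβ}_γ := tr(F^α F^β F_γ). -/

import Mathlib

open Matrix BigOperators
open Kronecker

/-- Matrix on `V × V × V` acting as `T` on the first and second factors. -/
def lift12 {k V : Type*} [Semiring k] [DecidableEq V]
    (T : Matrix (V × V) (V × V) k) : Matrix (V × V × V) (V × V × V) k :=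
  Matrix.of fun p q =>
    T (p.1, p.2.1) (q.1, q.2.1) * (if p.2.2 = q.2.2 then 1 else 0)

/-- Matrix on `V × V × V` acting as `T` on the first and third factors. -/
def lift13 {k V : Type*} [Semiring k] [DecidableEq V]
    (T : Matrix (V × V) (V × V) k) : Matrix (V × V × V) (V × V × V) k :=
  Matrix.of fun p q =>
    T (p.1, p.2.2) (q.1, q.2.2) * (if p.2.1 = q.2.1 then 1 else 0)

/-- Matrix on `V × V × V` acting as `T` on the second and third factors. -/
def lift23 {k V : Type*} [Semiring k] [DecidableEq V]
    (T : Matrix (V × V) (V × V) k) : Matrix (V × V × V) (V × V × V) k :=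
  Matrix.of fun p q =>
    T (p.2.1, p.2.2) (q.2.1, q.2.2) * (if p.1 = q.1 then 1 else 0)

private lemma trace_mul_std {k V : Type*} [Field k] [Fintype V] [DecidableEq V]
    (M : Matrix V V k) (b e : V) :
    (M * Matrix.single e b (1:k)).trace = M b e := by
  simp [Matrix.trace, Matrix.diag, Matrix.mul_apply, Matrix.single,
    Finset.sum_ite_eq, and_comm, ite_and]

private def rev3 (ι : Type*) : ι × ι × ι ≃ ι × ι × ι :=
  ⟨fun p => (p.2.2, p.2.1, p.1), fun p => (p.2.2, p.2.1, p.1),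
    fun ⟨_, _, _⟩ => rfl, fun ⟨_, _, _⟩ => rfl⟩

private lemma triple_sum {M ι : Type*} [AddCommMonoid M] [Fintype ι] (f : ι → ι → ι → M) :
    ∑ p : ι × ι × ι, f p.1 p.2.1 p.2.2 = ∑ α, ∑ β, ∑ γ, f α β γ := by
  rw [Fintype.sum_prod_type]
  simp [Fintype.sum_prod_type]

private lemma sum_rev {M ι : Type*} [AddCommMonoid M] [Fintype ι] (f : ι → ι → ι → M) :
    ∑ α, ∑ β, ∑ γ, f α β γ = ∑ α, ∑ β, ∑ γ, f γ β α := by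
  rw [← triple_sum, ← triple_sum]
  exact Fintype.sum_equiv (rev3 ι) _ _ (fun ⟨a, b, c⟩ => rfl)

theorem pentagon_mixed_permutation_relation
    {k V ι : Type*} [Field k] [Fintype V] [DecidableEq V] [Fintype ι] [DecidableEq ι]
    (S : Matrix (V × V) (V × V) k)
    (hSinv : IsUnit S)
    (hpent : lift12 S * lift13 S * lift23 S = lift23 S * lift12 S)
    (G F Gd Fd : ι → Matrix V V k)
    (hdecomp : ∀ a b c d, S (a, b) (c, d) = ∑ α, G α a c * F α b d)
    (hFdual : ∀ α β, (Fd α * F β).trace = if α = β then (1 : k) else 0)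
    (hGdual : ∀ α β, (G α * Gd β).trace = if α = β then (1 : k) else 0) :
    ∀ σ τ, ∑ α, ∑ β, ∑ γ, ((G α * G β * Gd τ).trace * (F β * F γ * Fd σ).trace) • (F α * G γ) = G σ * F τ := by
  intro σ τ
  have h12 : lift12 S = ∑ α, G α ⊗ₖ (F α ⊗ₖ (1 : Matrix V V k)) := by
    ext ⟨a, b, c⟩ ⟨d, e, f⟩
    simp [lift12, hdecomp, Matrix.one_apply, Finset.sum_mul, mul_assoc, Matrix.sum_apply]
  have h13 : lift13 S = ∑ α, G α ⊗ₖ ((1 : Matrix V V k) ⊗ₖ F α) := by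
    ext ⟨a, b, c⟩ ⟨d, e, f⟩
    simp [lift13, hdecomp, Matrix.one_apply, Finset.sum_mul, Matrix.sum_apply]
  have h23 : lift23 S = ∑ α, (1 : Matrix V V k) ⊗ₖ (G α ⊗ₖ F α) := by
    ext ⟨a, b, c⟩ ⟨d, e, f⟩
    simp [lift23, hdecomp, Matrix.one_apply, Finset.sum_mul, Matrix.sum_apply]
  ext b e
  set E : Matrix V V k := Matrix.single e b (1:k) with hE
  set K : Matrix (V × V × V) (V × V × V) k := Gd τ ⊗ₖ (E ⊗ₖ Fd σ) with hK
  have key : ((lift12 S * lift13 S * lift23 S) * K).trace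
      = ((lift23 S * lift12 S) * K).trace := by rw [hpent]
  have hL : ((lift12 S * lift13 S * lift23 S) * K).trace
      = ∑ α, ∑ β, ∑ γ, (G γ * G β * Gd τ).trace * (F β * F α * Fd σ).trace * (F γ * G α) b e := by
    rw [h12, h13, h23, hK, hE]
    simp only [Finset.sum_mul, Finset.mul_sum, Matrix.trace_sum,
      ← Matrix.mul_kronecker_mul, Matrix.trace_kronecker, mul_one, one_mul,
      trace_mul_std]
    refine Finset.sum_congr rfl fun α _ => Finset.sum_congr rfl fun β _ =>
      Finset.sum_congr rfl fun γ _ => by ring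
  have hR : ((lift23 S * lift12 S) * K).trace = (G σ * F τ) b e := by
    rw [h23, h12, hK, hE]
    simp only [Finset.sum_mul, Finset.mul_sum, Matrix.trace_sum,
      ← Matrix.mul_kronecker_mul, Matrix.trace_kronecker, mul_one, one_mul,
      trace_mul_std]
    have hF' : ∀ γ : ι, (F γ * Fd σ).trace = if σ = γ then (1:k) else 0 := fun γ => by
      rw [Matrix.trace_mul_comm]; exact hFdual σ γ
    simp [hGdual, hF', Finset.sum_ite_eq, ite_mul, mul_ite]
  rw [hL, hR] at key
  rw [sum_rev fun α β γ => ((G α * G β * Gd τ).trace * (F β * F γ * Fd σ).trace) • (F α * G γ)]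
  have : ∀ b' e', (∑ α, ∑ β, ∑ γ, ((G γ * G β * Gd τ).trace * (F β * F α * Fd σ).trace) • (F γ * G α)) b' e'
      = ∑ α, ∑ β, ∑ γ, (G γ * G β * Gd τ).trace * (F β * F α * Fd σ).trace * (F γ * G α) b' e' := by
    intro b' e'
    simp [Matrix.sum_apply]
  exact (this b e).trans key
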